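/- The number of connected endofunctions on {1,...,n} with no fixed point equals (n-1)! · Σ_{j=0}^{n-2} n^j/j!. -/

import Mathlib

def ConnFun {n : ℕ} (f : Fin n → Fin n) : Prop :=
  Nonempty (Fin n) ∧ ∀ i j, Relation.EqvGen (fun a b => f a = b) i j

open Function Finset
open scoped Classical

section Part1

variable {α : Type}

/-- Trajectories of two functions agreeing off `p` coincide until first entry into `p`. -/
lemma iterate_eq_of_agree {f g : α → α} {p : α → Prop}
    (hfg : ∀ x, ¬ p x → f x = g x) {x : α} {m : ℕ}
    (h : ∀ i < m, ¬ p (f^[i] x)) : f^[m] x = g^[m] x := by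
  induction m with
  | zero => rfl
  | succ m ih =>
    rw [iterate_succ_apply', iterate_succ_apply']
    have h1 : f^[m] x = g^[m] x := ih fun i hi => h i (Nat.lt_succ_of_lt hi)
    rw [← h1, hfg _ (h m (Nat.lt_succ_self m))]

/-- First-entry version of reachability. -/
lemma exists_first_hit (f : α → α) (p : α → Prop) {x : α} (h : ∃ m, p (f^[m] x)) :
    ∃ m, p (f^[m] x) ∧ ∀ i < m, ¬ p (f^[i] x) := by
  classical
  exact ⟨Nat.find h, Nat.find_spec h, fun i hi => Nat.find_min h hi⟩

/-- In a finite type, every point eventually reaches a periodic point. -/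
lemma exists_reach_periodic [Finite α] (f : α → α) (x : α) :
    ∃ a p, 0 < p ∧ f^[p] (f^[a] x) = f^[a] x := by
  obtain ⟨i, j, hij, hfij⟩ := Finite.exists_ne_map_eq_of_infinite (fun m : ℕ => f^[m] x)
  rcases hij.lt_or_gt with h | h
  · exact ⟨i, j - i, Nat.sub_pos_of_lt h, by
      rw [← Function.iterate_add_apply, Nat.sub_add_cancel h.le]; exact hfij.symm⟩
  · exact ⟨j, i - j, Nat.sub_pos_of_lt h, by
      rw [← Function.iterate_add_apply, Nat.sub_add_cancel h.le]; exact hfij⟩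

lemma eqvGen_iff (f : α → α) (i j : α) :
    Relation.EqvGen (fun a b => f a = b) i j ↔ ∃ p q, f^[p] i = f^[q] j := by
  constructor
  · intro h
    induction h with
    | rel a b hab => exact ⟨1, 0, hab⟩
    | refl a => exact ⟨0, 0, rfl⟩
    | symm a b _ ih => obtain ⟨p, q, h⟩ := ih; exact ⟨q, p, h.symm⟩
    | trans a b c _ _ ih1 ih2 =>
      obtain ⟨p, q, h1⟩ := ih1
      obtain ⟨p', q', h2⟩ := ih2
      refine ⟨p' + p, q + q', ?_⟩
      have e1 : f^[p'] (f^[p] a) = f^[p'] (f^[q] b) := by rw [h1]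
      have e2 : f^[q] (f^[p'] b) = f^[q] (f^[q'] c) := by rw [h2]
      rw [← Function.iterate_add_apply, ← Function.iterate_add_apply] at e1 e2
      rw [e1, Nat.add_comm p' q, e2]
  · rintro ⟨p, q, h⟩
    have key : ∀ (m : ℕ) (a : α), Relation.EqvGen (fun a b => f a = b) a (f^[m] a) := by
      intro m a
      induction m with
      | zero => exact Relation.EqvGen.refl a
      | succ m ih =>
        refine Relation.EqvGen.trans _ _ _ ih ?_
        rw [iterate_succ_apply']
        exact Relation.EqvGen.rel _ _ rfl
    exact Relation.EqvGen.trans _ _ _ (key p i) (h ▸ (key q j).symm _ _)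

end Part1

def RootedF {α : Type} (R : Finset α) (f : α → α) : Prop :=
  (∀ x ∈ R, f x = x) ∧ ∀ x, ∃ m, f^[m] x ∈ R

section Fiber

variable {α : Type} [Fintype α] [DecidableEq α]

lemma card_fiber (R : Finset α) (J : Finset {x : α // x ∉ R}) :
    Nat.card {f : α → α // RootedF R f ∧
        Finset.univ.filter (fun x : {x : α // x ∉ R} => f ↑x ∈ R) = J} =
      R.card ^ J.card *
        Nat.card {g : {x : α // x ∉ R} → {x : α // x ∉ R} // RootedF J g} := by
  classical
  let F : (↥J → ↥R) → ({x : α // x ∉ R} → {x : α // x ∉ R}) → α → α := fun u g a =>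
    if ha : a ∈ R then a else
      if hx : (⟨a, ha⟩ : {x : α // x ∉ R}) ∈ J then ↑(u ⟨⟨a, ha⟩, hx⟩) else ↑(g ⟨a, ha⟩)
  have fact3 : ∀ u g a (ha : a ∈ R), F u g a = a := fun u g a ha => dif_pos ha
  have fact1 : ∀ u g (x : {x : α // x ∉ R}) (hx : x ∈ J), F u g ↑x = ↑(u ⟨x, hx⟩) := by
    intro u g x hx
    show dite _ _ _ = _
    rw [dif_neg x.2, dif_pos hx]
  have fact2 : ∀ u g (x : {x : α // x ∉ R}) (hx : x ∉ J), F u g ↑x = ↑(g x) := by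
    intro u g x hx
    show dite _ _ _ = _
    rw [dif_neg x.2, dif_neg hx]
  have fact4 : ∀ u g (x : {x : α // x ∉ R}) (m : ℕ), (∀ i < m, g^[i] x ∉ J) →
      (F u g)^[m] ↑x = ↑(g^[m] x) := by
    intro u g x m hm
    induction m with
    | zero => rfl
    | succ m ih =>
      rw [iterate_succ_apply', iterate_succ_apply',
        ih (fun i hi => hm i (Nat.lt_succ_of_lt hi)), fact2 u g _ (hm m (Nat.lt_succ_self m))]
  let Φ : ((↥J → ↥R) × {g : {x : α // x ∉ R} → {x : α // x ∉ R} // RootedF J g}) →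
      {f : α → α // RootedF R f ∧
        Finset.univ.filter (fun x : {x : α // x ∉ R} => f ↑x ∈ R) = J} := by
    refine fun p => ⟨F p.1 p.2.1, ⟨⟨fun a ha => fact3 _ _ a ha, ?_⟩, ?_⟩⟩
    · -- reachability
      intro a
      by_cases ha : a ∈ R
      · exact ⟨0, ha⟩
      · obtain ⟨m, hm, hmin⟩ := exists_first_hit p.2.1 (· ∈ J) (p.2.2.2 ⟨a, ha⟩)
        refine ⟨m + 1, ?_⟩
        have : (F p.1 p.2.1)^[m] a = ↑(p.2.1^[m] ⟨a, ha⟩) := fact4 _ _ ⟨a, ha⟩ m hmin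
        rw [iterate_succ_apply', this, fact1 _ _ _ hm]
        exact Subtype.coe_prop _
    · -- fiber computation
      ext x
      simp only [mem_filter, mem_univ, true_and]
      constructor
      · intro hfR
        by_contra hx
        rw [fact2 _ _ _ hx] at hfR
        exact (p.2.1 x).2 hfR
      · intro hx
        rw [fact1 _ _ _ hx]
        exact Subtype.coe_prop _
  have hbij : Function.Bijective Φ := by
    constructor
    · rintro ⟨u, g, hg⟩ ⟨u', g', hg'⟩ h
      have h1 : F u g = F u' g' := congrArg Subtype.val h
      have hu : u = u' := by
        funext j
        apply Subtype.ext
        have e1 := fact1 u g ↑j j.2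
        have e2 := fact1 u' g' ↑j j.2
        rw [← e1, ← e2, h1]
      have hgg : g = g' := by
        funext x
        by_cases hx : x ∈ J
        · rw [hg.1 x hx, hg'.1 x hx]
        · apply Subtype.ext
          have e1 := fact2 u g x hx
          have e2 := fact2 u' g' x hx
          rw [← e1, ← e2, h1]
      simp [Prod.ext_iff, hu, hgg]
    · rintro ⟨f, ⟨hfix, hreach⟩, hfib⟩
      have hJf : ∀ x : {x : α // x ∉ R}, x ∈ J ↔ f ↑x ∈ R := by
        intro x
        rw [← hfib]
        simp
      set u : ↥J → ↥R := fun j => ⟨f ↑↑j, (hJf ↑j).mp j.2⟩ with hu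
      set g : {x : α // x ∉ R} → {x : α // x ∉ R} := fun x =>
        if hx : x ∈ J then x else ⟨f ↑x, fun hR => hx ((hJf x).mpr hR)⟩ with hgdef
      have hg : RootedF J g := by
        constructor
        · intro x hx
          simp [hgdef, dif_pos hx]
        · intro x
          obtain ⟨m, hm, hmin⟩ := exists_first_hit f (· ∈ R) (hreach ↑x)
          have hm0 : m ≠ 0 := by
            intro h0
            rw [h0] at hm
            exact x.2 hm
          obtain ⟨m', rfl⟩ := Nat.exists_eq_succ_of_ne_zero hm0
          have claim : ∀ i ≤ m', (↑(g^[i] x) : α) = f^[i] ↑x := by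
            intro i hi
            induction i with
            | zero => rfl
            | succ i ih =>
              have hi' : i ≤ m' := Nat.le_of_succ_le hi
              have hii := ih hi'
              have hnotJ : g^[i] x ∉ J := by
                intro hmem
                have := (hJf _).mp hmem
                rw [hii, ← Function.iterate_succ_apply' f] at this
                exact hmin (i+1) (Nat.succ_lt_succ (Nat.lt_of_lt_of_le (Nat.lt_of_succ_le hi) (le_refl m'))) this
              rw [iterate_succ_apply', iterate_succ_apply', hgdef]
              rw [hgdef] at hnotJ
              simp only [dif_neg hnotJ]
              exact congrArg f hii
          refine ⟨m', (hJf _).mpr ?_⟩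
          rw [claim m' (le_refl m'), ← Function.iterate_succ_apply' f]
          exact hm
      refine ⟨⟨u, ⟨g, hg⟩⟩, ?_⟩
      apply Subtype.ext
      funext a
      show F u g a = f a
      by_cases ha : a ∈ R
      · rw [fact3 _ _ a ha, hfix a ha]
      · by_cases hx : (⟨a, ha⟩ : {x : α // x ∉ R}) ∈ J
        · rw [fact1 u g ⟨a, ha⟩ hx]
        · rw [fact2 u g ⟨a, ha⟩ hx, hgdef]
          simp [dif_neg hx]
  rw [← Nat.card_eq_of_bijective Φ hbij, Nat.card_prod, Nat.card_fun]
  rw [Nat.card_eq_finsetCard, Nat.card_eq_finsetCard]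

end Fiber


lemma binom_aux (m k : ℕ) (hm : 1 ≤ m) :
    ∑ j ∈ Finset.range (m+1), m.choose j * (k ^ j * (j * m ^ (m - j)))
      = m * (k * (k + m) ^ (m - 1)) := by
  rw [Finset.sum_range_succ']
  simp only [Nat.choose_zero_right, pow_zero, Nat.zero_mul, Nat.mul_zero, Nat.add_zero]
  have hterm : ∀ i, m.choose (i+1) * (k ^ (i+1) * ((i+1) * m ^ (m - (i+1))))
      = m * (k * (k ^ i * m ^ (m - 1 - i) * (m-1).choose i)) := by
    intro i
    have h1 : m - (i+1) = m - 1 - i := by omega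
    have hc : m.choose (i+1) * (i+1) = m * (m-1).choose i := by
      have := Nat.add_one_mul_choose_eq (m-1) i
      rw [Nat.sub_add_cancel hm] at this
      exact this.symm
    have h2 : m.choose (i+1) * (k ^ (i+1) * ((i+1) * m ^ (m - 1 - i)))
        = (m.choose (i+1) * (i+1)) * (k ^ (i+1) * m ^ (m - 1 - i)) := by ring
    rw [h1, h2, hc, pow_succ]
    ring
  rw [Finset.sum_congr rfl fun i _ => hterm i, ← Finset.mul_sum, ← Finset.mul_sum, add_pow,
    Nat.sub_add_cancel hm]
  simp

lemma card_rootedF_aux : ∀ (m : ℕ) (α : Type) [Fintype α] [DecidableEq α] (R : Finset α),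
    R.Nonempty → Fintype.card α - R.card = m →
    Nat.card {f : α → α // RootedF R f} * Fintype.card α
      = R.card * Fintype.card α ^ m := by
  intro m
  induction m using Nat.strong_induction_on with
  | _ m IH =>
    intro α _ _ R hR hm
    classical
    rcases Nat.eq_zero_or_pos m with hm0 | hmpos
    · subst hm0
      have hcard : R = Finset.univ :=
        Finset.eq_univ_of_card R (le_antisymm (Finset.card_le_univ R) (by omega))
      subst hcard
      have h1 : Nat.card {f : α → α // RootedF Finset.univ f} = 1 := by
        rw [Nat.card_eq_one_iff_unique]
        constructor
        · constructor
          rintro ⟨f, hf⟩ ⟨g, hg⟩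
          apply Subtype.ext
          funext x
          show f x = g x
          rw [hf.1 x (mem_univ x), hg.1 x (mem_univ x)]
        · exact ⟨⟨id, fun x _ => rfl, fun x => ⟨0, mem_univ x⟩⟩⟩
      rw [h1, pow_zero, one_mul, mul_one, card_univ]
    · have hβ : Fintype.card {x : α // x ∉ R} = m := by
        have h1 : Fintype.card {x : α // x ∉ R} = Fintype.card α - R.card := by
          simp [Fintype.card_subtype_compl]
        omega
      have hkn : R.card + m = Fintype.card α := by
        have := Finset.card_le_univ R
        omega
      have hsplit : Nat.card {f : α → α // RootedF R f}
          = ∑ J : Finset {x : α // x ∉ R}, Nat.card {f : α → α // RootedF R f ∧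
              Finset.univ.filter (fun x : {x : α // x ∉ R} => f ↑x ∈ R) = J} :=
        calc Nat.card {f : α → α // RootedF R f}
            = Nat.card (Σ J : Finset {x : α // x ∉ R}, {F : {f : α → α // RootedF R f} //
                Finset.univ.filter (fun x : {x : α // x ∉ R} => F.1 ↑x ∈ R) = J}) :=
              Nat.card_congr (Equiv.sigmaFiberEquiv _).symm
          _ = ∑ J : Finset {x : α // x ∉ R}, Nat.card {F : {f : α → α // RootedF R f} //
                Finset.univ.filter (fun x : {x : α // x ∉ R} => F.1 ↑x ∈ R) = J} := by
              rw [Nat.card_eq_fintype_card, Fintype.card_sigma]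
              exact Finset.sum_congr rfl fun J _ => (Nat.card_eq_fintype_card).symm
          _ = _ := Finset.sum_congr rfl fun J _ =>
              Nat.card_congr (Equiv.subtypeSubtypeEquivSubtypeInter
                (fun f : α → α => RootedF R f)
                (fun f : α → α => Finset.univ.filter
                  (fun x : {x : α // x ∉ R} => f ↑x ∈ R) = J))
      have hstep : ∀ J : Finset {x : α // x ∉ R}, J.Nonempty →
          Nat.card {g : {x : α // x ∉ R} → {x : α // x ∉ R} // RootedF J g} * m
            = J.card * m ^ (m - J.card) := by
        intro J hJ
        have hlt : m - J.card < m := Nat.sub_lt hmpos (Finset.card_pos.mpr hJ)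
        have := IH (m - J.card) hlt {x : α // x ∉ R} J hJ (by rw [hβ])
        rwa [hβ] at this
      have hempty : Nat.card {g : {x : α // x ∉ R} → {x : α // x ∉ R} //
          RootedF (∅ : Finset {x : α // x ∉ R}) g} = 0 := by
        haveI : Nonempty {x : α // x ∉ R} := Fintype.card_pos_iff.mp (hβ ▸ hmpos)
        haveI : IsEmpty {g : {x : α // x ∉ R} → {x : α // x ∉ R} //
            RootedF (∅ : Finset {x : α // x ∉ R}) g} := by
          constructor
          rintro ⟨g, hg⟩
          obtain ⟨mm, hmm⟩ := hg.2 (Classical.arbitrary _)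
          exact absurd hmm (Finset.notMem_empty _)
        exact Nat.card_of_isEmpty
      have hmain : Nat.card {f : α → α // RootedF R f} * m = m * (R.card * (R.card + m) ^ (m-1)) := by
        rw [hsplit, Finset.sum_congr rfl (fun J _ => card_fiber R J), Finset.sum_mul]
        have h2 : ∀ J : Finset {x : α // x ∉ R},
            R.card ^ J.card * Nat.card {g : {x : α // x ∉ R} → {x : α // x ∉ R} // RootedF J g} * m
            = R.card ^ J.card * (Nat.card {g : {x : α // x ∉ R} → {x : α // x ∉ R} // RootedF J g} * m) :=
          fun J => by ring
        rw [Finset.sum_congr rfl fun J _ => h2 J]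
        rw [show (Finset.univ : Finset (Finset {x : α // x ∉ R}))
            = (Finset.univ : Finset {x : α // x ∉ R}).powerset from (Finset.powerset_univ).symm]
        rw [Finset.powerset_card_disjiUnion]
        erw [Finset.sum_disjiUnion]
        rw [Finset.card_univ, hβ,
          ← binom_aux m R.card hmpos]
        apply Finset.sum_congr rfl
        intro i _
        rcases Nat.eq_zero_or_pos i with rfl | hipos
        · rw [Finset.powersetCard_zero, Finset.sum_singleton, hempty]
          simp
        · have hconst : ∀ J ∈ Finset.powersetCard i (Finset.univ : Finset {x : α // x ∉ R}),
              R.card ^ J.card * (Nat.card {g : {x : α // x ∉ R} → {x : α // x ∉ R} // RootedF J g} * m)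
                = R.card ^ i * (i * m ^ (m - i)) := by
            intro J hJ
            have hcard : J.card = i := (Finset.mem_powersetCard.mp hJ).2
            have hne : J.Nonempty := Finset.card_pos.mp (hcard ▸ hipos)
            rw [hstep J hne, hcard]
          rw [Finset.sum_congr rfl hconst, Finset.sum_const, Finset.card_powersetCard,
            Finset.card_univ, hβ, smul_eq_mul]
      have ht : Nat.card {f : α → α // RootedF R f} = R.card * (R.card + m) ^ (m - 1) := by
        rw [mul_comm m (R.card * (R.card + m) ^ (m-1))] at hmain
        exact Nat.eq_of_mul_eq_mul_right hmpos hmain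
      rw [ht, hkn]
      rw [mul_assoc, ← pow_succ, Nat.sub_add_cancel hmpos]

theorem card_rootedF (α : Type) [Fintype α] [DecidableEq α] (R : Finset α) (hR : R.Nonempty) :
    Nat.card {f : α → α // RootedF R f} * Fintype.card α
      = R.card * Fintype.card α ^ (Fintype.card α - R.card) :=
  card_rootedF_aux (Fintype.card α - R.card) α R hR rfl


def CycFun {γ : Type} (σ : γ → γ) : Prop := ∀ x y, ∃ m, σ^[m] x = y

section Cyc
variable {γ : Type} [Fintype γ] [DecidableEq γ]

lemma cycFun_surjective {σ : γ → γ} (hσ : CycFun σ) : Function.Surjective σ := by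
  intro y
  obtain ⟨m, hm⟩ := hσ (σ y) y
  refine ⟨σ^[m] y, ?_⟩
  rw [← Function.iterate_succ_apply' σ m y, Function.iterate_succ_apply]
  exact hm

lemma cycFun_injective {σ : γ → γ} (hσ : CycFun σ) : Function.Injective σ :=
  Finite.injective_iff_surjective.mpr (cycFun_surjective hσ)

lemma cycFun_orbit_bijective {σ : γ → γ} (hσ : CycFun σ) (x : γ) :
    Function.Bijective (fun i : Fin (Fintype.card γ) => σ^[i.val] x) := by
  rw [Fintype.bijective_iff_injective_and_card]
  refine ⟨?_, by simp⟩
  have key : ∀ u v : ℕ, u < v → v < Fintype.card γ → σ^[u] x = σ^[v] x → False := by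
    intro u v huv hvk hab
    set p := v - u with hp
    have hp1 : 0 < p := by omega
    have hpk : p < Fintype.card γ := by omega
    have h1 : σ^[p] (σ^[u] x) = σ^[u] x := by
      rw [← Function.iterate_add_apply, hp, Nat.sub_add_cancel huv.le]
      exact hab.symm
    have hfix : ∀ y, σ^[p] y = y := by
      intro y
      obtain ⟨m, hm⟩ := hσ (σ^[u] x) y
      rw [← hm, ← Function.iterate_add_apply, Nat.add_comm p m,
        Function.iterate_add_apply, h1]
    have hidp : σ^[p] = id := funext hfix
    have hsurj : Function.Surjective (fun i : Fin p => σ^[i.val] x) := by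
      intro y
      obtain ⟨m, hm⟩ := hσ x y
      refine ⟨⟨m % p, Nat.mod_lt _ hp1⟩, ?_⟩
      have h2 : σ^[m] x = σ^[m % p] x := by
        conv_lhs => rw [← Nat.mod_add_div m p]
        rw [Function.iterate_add_apply, Function.iterate_mul, hidp]
        simp
      simp only [← h2, hm]
    have hcard := Fintype.card_le_of_surjective _ hsurj
    simp only [Fintype.card_fin] at hcard
    omega
  intro a b hab
  simp only at hab
  by_contra hne
  rcases lt_trichotomy a.val b.val with h | h | h
  · exact key a.val b.val h b.isLt hab
  · exact hne (Fin.ext h)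
  · exact key b.val a.val h a.isLt hab.symm

lemma cycFun_full_period {σ : γ → γ} (hσ : CycFun σ) (x : γ) :
    σ^[Fintype.card γ] x = x := by
  obtain ⟨hinj, hsurj⟩ := cycFun_orbit_bijective hσ x
  obtain ⟨i, hi⟩ := hsurj (σ^[Fintype.card γ] x)
  simp only at hi
  have hik : i.val ≤ Fintype.card γ := Nat.le_of_lt i.isLt
  have h2 : σ^[i.val] (σ^[Fintype.card γ - i.val] x) = σ^[i.val] x := by
    rw [← Function.iterate_add_apply, Nat.add_sub_cancel' hik]
    exact hi.symm
  have h3 : σ^[Fintype.card γ - i.val] x = x := ((cycFun_injective hσ).iterate i.val) h2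
  by_cases hi0 : i.val = 0
  · rw [← hi]
    have : i = ⟨0, by omega⟩ := Fin.ext hi0
    rw [this]
    rfl
  · have hplt : Fintype.card γ - i.val < Fintype.card γ := by
      have := i.isLt; omega
    have h4 := hinj (a₁ := ⟨Fintype.card γ - i.val, hplt⟩)
      (a₂ := ⟨0, by have := i.isLt; omega⟩) (by simpa using h3)
    have h5 : Fintype.card γ - i.val = 0 := congrArg Fin.val h4
    have := i.isLt
    omega

lemma cycFun_iterate_mod {σ : γ → γ} (hσ : CycFun σ) (x : γ) (m : ℕ) :
    σ^[m % Fintype.card γ] x = σ^[m] x := by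
  have hq : ∀ q, (σ^[Fintype.card γ])^[q] x = x := by
    intro q
    induction q with
    | zero => rfl
    | succ q ih => rw [Function.iterate_succ_apply, cycFun_full_period hσ, ih]
  conv_rhs => rw [← Nat.mod_add_div m (Fintype.card γ)]
  rw [Function.iterate_add_apply, Function.iterate_mul, hq]

open Fin.NatCast Fin.CommRing in
lemma card_cycFun_mul [Nonempty γ] :
    Nat.card {σ : γ → γ // CycFun σ} * Fintype.card γ = (Fintype.card γ).factorial := by
  classical
  haveI : NeZero (Fintype.card γ) := ⟨Fintype.card_ne_zero⟩
  have hiter : ∀ (e : Fin (Fintype.card γ) ≃ γ) (m : ℕ) (i : Fin (Fintype.card γ)),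
      (fun y => e (e.symm y + 1))^[m] (e i) = e (i + (m : Fin (Fintype.card γ))) := by
    intro e m
    induction m with
    | zero => intro i; simp
    | succ m ih =>
      intro i
      rw [Function.iterate_succ_apply', ih]
      simp only [Equiv.symm_apply_apply]
      congr 1
      push_cast
      ring
  have hcyc : ∀ e : Fin (Fintype.card γ) ≃ γ, CycFun (fun y => e (e.symm y + 1)) := by
    intro e x y
    refine ⟨(e.symm y - e.symm x).val, ?_⟩
    have h1 := hiter e (e.symm y - e.symm x).val (e.symm x)
    rw [Equiv.apply_symm_apply] at h1
    rw [h1, Fin.cast_val_eq_self]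
    have h2 : e.symm x + (e.symm y - e.symm x) = e.symm y := by ring
    rw [h2, Equiv.apply_symm_apply]
  let Θ : (Fin (Fintype.card γ) ≃ γ) → ({σ : γ → γ // CycFun σ} × γ) :=
    fun e => (⟨fun y => e (e.symm y + 1), hcyc e⟩, e 0)
  have hbij : Function.Bijective Θ := by
    constructor
    · intro e e' h
      have h1 : (fun y => e (e.symm y + 1)) = (fun y => e' (e'.symm y + 1)) :=
        congrArg (fun p => (p.1 : γ → γ)) h
      have h2 : e 0 = e' 0 := congrArg Prod.snd h
      apply Equiv.ext
      intro i
      have k1 : e i = (fun y => e (e.symm y + 1))^[i.val] (e 0) := by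
        rw [hiter e i.val 0, zero_add, Fin.cast_val_eq_self]
      have k2 : e' i = (fun y => e' (e'.symm y + 1))^[i.val] (e' 0) := by
        rw [hiter e' i.val 0, zero_add, Fin.cast_val_eq_self]
      rw [k1, k2, h1, h2]
    · rintro ⟨⟨σ, hσ⟩, x⟩
      let e : Fin (Fintype.card γ) ≃ γ := Equiv.ofBijective _ (cycFun_orbit_bijective hσ x)
      have he : ∀ i, e i = σ^[i.val] x := fun i => rfl
      refine ⟨e, ?_⟩
      have hx : e 0 = x := by
        rw [he]
        simp
      refine Prod.ext ?_ hx
      apply Subtype.ext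
      funext y
      show e (e.symm y + 1) = σ y
      obtain ⟨i, rfl⟩ := e.surjective y
      rw [Equiv.symm_apply_apply, he, he, ← Function.iterate_succ_apply' σ i.val x]
      have hv : (i + 1).val = (i.val + (1 : Fin (Fintype.card γ)).val) % Fintype.card γ :=
        Fin.val_add i 1
      have hv1 : ((1 : Fin (Fintype.card γ))).val = 1 % Fintype.card γ := by
        rw [← Nat.cast_one, Fin.val_natCast]
      rw [hv, hv1, Nat.add_mod_mod, cycFun_iterate_mod hσ]
  have hcards := Nat.card_eq_of_bijective Θ hbij
  rw [Nat.card_eq_fintype_card, Fintype.card_equiv ((Fintype.equivFin γ).symm)] at hcards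
  rw [Nat.card_prod, Nat.card_eq_fintype_card (α := γ)] at hcards
  simp only [Fintype.card_fin] at hcards
  exact hcards.symm

lemma card_cycFun [Nonempty γ] :
    Nat.card {σ : γ → γ // CycFun σ} = (Fintype.card γ - 1).factorial := by
  have h := card_cycFun_mul (γ := γ)
  have hk : 0 < Fintype.card γ := Fintype.card_pos
  have hfac : (Fintype.card γ).factorial = (Fintype.card γ - 1).factorial * Fintype.card γ := by
    obtain ⟨m, hm⟩ := Nat.exists_eq_succ_of_ne_zero hk.ne'
    rw [hm]
    simp [Nat.factorial_succ]
    ring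
  rw [hfac] at h
  exact Nat.eq_of_mul_eq_mul_right hk h

end Cyc

-- MAIN FIBER LEMMAS

lemma main_fiber_empty (n : ℕ) (hn : 1 ≤ n) (C : Finset (Fin n)) (h2 : ¬ 2 ≤ C.card) :
    Nat.card {f : Fin n → Fin n //
        ((∀ i j, ∃ p q, f^[p] i = f^[q] j) ∧ ∀ i, f i ≠ i) ∧
        Finset.univ.filter (fun x => ∃ p, 0 < p ∧ f^[p] x = x) = C} = 0 := by
  classical
  haveI : IsEmpty {f : Fin n → Fin n //
      ((∀ i j, ∃ p q, f^[p] i = f^[q] j) ∧ ∀ i, f i ≠ i) ∧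
      Finset.univ.filter (fun x => ∃ p, 0 < p ∧ f^[p] x = x) = C} := by
    constructor
    rintro ⟨f, ⟨⟨hconn, hfpf⟩, hfib⟩⟩
    have hCiff : ∀ x, x ∈ C ↔ ∃ p, 0 < p ∧ f^[p] x = x := by
      intro x
      rw [← hfib]
      simp
    have x0 : Fin n := ⟨0, hn⟩
    obtain ⟨b, p, hp, hper⟩ := exists_reach_periodic f x0
    have hc : f^[b] x0 ∈ C := (hCiff _).mpr ⟨p, hp, hper⟩
    have hfc : f (f^[b] x0) ∈ C := by
      obtain ⟨t, ht, hft⟩ := (hCiff _).mp hc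
      refine (hCiff _).mpr ⟨t, ht, ?_⟩
      rw [← Function.iterate_succ_apply, Function.iterate_succ_apply', hft]
    exact h2 (Finset.one_lt_card.mpr ⟨_, hc, _, hfc, (hfpf _).symm⟩)
  exact Nat.card_of_isEmpty

lemma main_fiber (n : ℕ) (C : Finset (Fin n)) (hC2 : 2 ≤ C.card) :
    Nat.card {f : Fin n → Fin n //
        ((∀ i j, ∃ p q, f^[p] i = f^[q] j) ∧ ∀ i, f i ≠ i) ∧
        Finset.univ.filter (fun x => ∃ p, 0 < p ∧ f^[p] x = x) = C} =
      (C.card - 1).factorial * Nat.card {g : Fin n → Fin n // RootedF C g} := by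
  classical
  haveI hCne : Nonempty ↥C := by
    rw [Finset.nonempty_coe_sort]
    exact Finset.card_pos.mp (by omega)
  -- builder
  let F : ({x : Fin n // x ∈ C} → {x : Fin n // x ∈ C}) → (Fin n → Fin n) → Fin n → Fin n :=
    fun σ g a => if ha : a ∈ C then ↑(σ ⟨a, ha⟩) else g a
  have hF_in : ∀ σ g (x : {x : Fin n // x ∈ C}), F σ g ↑x = ↑(σ x) := by
    intro σ g x
    show dite _ _ _ = _
    rw [dif_pos x.2]
  have hF_out : ∀ σ g a, a ∉ C → F σ g a = g a := by
    intro σ g a ha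
    exact dif_neg ha
  have hFiter_in : ∀ σ g (m : ℕ) (x : {x : Fin n // x ∈ C}),
      (F σ g)^[m] ↑x = ↑(σ^[m] x) := by
    intro σ g m x
    induction m with
    | zero => rfl
    | succ m ih => rw [iterate_succ_apply', iterate_succ_apply', ih, hF_in]
  have hreach : ∀ σ g, RootedF C g → ∀ a, ∃ m, (F σ g)^[m] a ∈ C := by
    intro σ g hg a
    by_cases ha : a ∈ C
    · exact ⟨0, ha⟩
    · obtain ⟨m, hm, hmin⟩ := exists_first_hit g (· ∈ C) (hg.2 a)
      refine ⟨m, ?_⟩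
      have := iterate_eq_of_agree (f := g) (g := F σ g) (p := (· ∈ C))
        (fun y hy => (hF_out σ g y hy).symm) (x := a) (m := m) hmin
      rw [← this]
      exact hm
  have hCstable : ∀ σ g (j : ℕ) (y : Fin n), y ∈ C → (F σ g)^[j] y ∈ C := by
    intro σ g j y hy
    induction j with
    | zero => exact hy
    | succ j ih =>
      rw [iterate_succ_apply']
      have := hF_in σ g ⟨(F σ g)^[j] y, ih⟩
      simp only at this
      rw [this]
      exact Subtype.coe_prop _
  let Ψ : ({σ : {x : Fin n // x ∈ C} → {x : Fin n // x ∈ C} // CycFun σ} ×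
      {g : Fin n → Fin n // RootedF C g}) →
      {f : Fin n → Fin n //
        ((∀ i j, ∃ p q, f^[p] i = f^[q] j) ∧ ∀ i, f i ≠ i) ∧
        Finset.univ.filter (fun x => ∃ p, 0 < p ∧ f^[p] x = x) = C} := by
    rintro ⟨⟨σ, hσ⟩, ⟨g, hg⟩⟩
    refine ⟨F σ g, ⟨⟨?_, ?_⟩, ?_⟩⟩
    · -- connectivity
      intro i j
      obtain ⟨a, ha⟩ := hreach σ g hg i
      obtain ⟨b, hb⟩ := hreach σ g hg j
      obtain ⟨m, hm⟩ := hσ ⟨(F σ g)^[a] i, ha⟩ ⟨(F σ g)^[b] j, hb⟩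
      refine ⟨m + a, b, ?_⟩
      rw [Function.iterate_add_apply]
      have h1 := hFiter_in σ g m ⟨(F σ g)^[a] i, ha⟩
      simp only at h1
      rw [h1, hm]
    · -- no fixed point
      intro a hfa
      by_cases ha : a ∈ C
      · have h1 : (↑(σ ⟨a, ha⟩) : Fin n) = a := by
          rw [← hF_in σ g ⟨a, ha⟩]
          exact hfa
        have hfix : σ ⟨a, ha⟩ = ⟨a, ha⟩ := Subtype.ext h1
        have hall : ∀ m, σ^[m] ⟨a, ha⟩ = ⟨a, ha⟩ := by
          intro m
          induction m with
          | zero => rfl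
          | succ m ih => rw [iterate_succ_apply', ih, hfix]
        have huniq : ∀ y : {x : Fin n // x ∈ C}, y = ⟨a, ha⟩ := by
          intro y
          obtain ⟨m, hm⟩ := hσ ⟨a, ha⟩ y
          rw [← hm, hall]
        obtain ⟨u, hu, v, hv, huv⟩ := Finset.one_lt_card.mp hC2
        exact huv (by rw [show u = (⟨a, ha⟩ : {x : Fin n // x ∈ C}).val from
          congrArg Subtype.val (huniq ⟨u, hu⟩),
          show v = (⟨a, ha⟩ : {x : Fin n // x ∈ C}).val from
          congrArg Subtype.val (huniq ⟨v, hv⟩)])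
      · rw [hF_out σ g a ha] at hfa
        have hall : ∀ m, g^[m] a = a := by
          intro m
          induction m with
          | zero => rfl
          | succ m ih => rw [iterate_succ_apply', ih, hfa]
        obtain ⟨m, hm⟩ := hg.2 a
        rw [hall] at hm
        exact ha hm
    · -- periodic set is exactly C
      ext x
      simp only [Finset.mem_filter, Finset.mem_univ, true_and]
      constructor
      · rintro ⟨p, hp, hfp⟩
        obtain ⟨m, hm⟩ := hreach σ g hg x
        have hiter_per : ∀ q, (F σ g)^[p * q] x = x := by
          intro q
          induction q with
          | zero => rfl
          | succ q ih =>
            rw [Nat.mul_succ, Function.iterate_add_apply, hfp, ih]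
        have hle : m ≤ p * m := Nat.le_mul_of_pos_left m hp
        have : x = (F σ g)^[p * m - m] ((F σ g)^[m] x) := by
          rw [← Function.iterate_add_apply, Nat.sub_add_cancel hle, hiter_per m]
        rw [this]
        exact hCstable σ g _ _ hm
      · intro hx
        obtain ⟨m, hm⟩ := hσ (σ ⟨x, hx⟩) ⟨x, hx⟩
        refine ⟨m + 1, Nat.succ_pos m, ?_⟩
        rw [Function.iterate_add_apply]
        have h0 : (F σ g)^[1] x = ↑(σ ⟨x, hx⟩) := hF_in σ g ⟨x, hx⟩
        rw [h0]
        have h1 := hFiter_in σ g m (σ ⟨x, hx⟩)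
        rw [h1, hm]
  have hbij : Function.Bijective Ψ := by
    constructor
    · rintro ⟨⟨σ, hσ⟩, ⟨g, hg⟩⟩ ⟨⟨σ', hσ'⟩, ⟨g', hg'⟩⟩ h
      have h1 : F σ g = F σ' g' := congrArg Subtype.val h
      have hσσ : σ = σ' := by
        funext x
        apply Subtype.ext
        rw [← hF_in σ g x, ← hF_in σ' g' x, h1]
      have hgg : g = g' := by
        funext a
        by_cases ha : a ∈ C
        · rw [hg.1 a ha, hg'.1 a ha]
        · rw [← hF_out σ g a ha, ← hF_out σ' g' a ha, h1]
      simp [Prod.ext_iff, hσσ, hgg]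
    · rintro ⟨f, ⟨⟨hconn, hfpf⟩, hfib⟩⟩
      have hCiff : ∀ x, x ∈ C ↔ ∃ p, 0 < p ∧ f^[p] x = x := by
        intro x
        rw [← hfib]
        simp
      have hfC : ∀ x, x ∈ C → f x ∈ C := by
        intro x hx
        obtain ⟨p, hp, hfp⟩ := (hCiff x).mp hx
        refine (hCiff _).mpr ⟨p, hp, ?_⟩
        rw [← Function.iterate_succ_apply, Function.iterate_succ_apply', hfp]
      set σ : {x : Fin n // x ∈ C} → {x : Fin n // x ∈ C} :=
        fun x => ⟨f ↑x, hfC ↑x x.2⟩ with hσdef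
      have hσiter : ∀ (m : ℕ) (x : {x : Fin n // x ∈ C}), (↑(σ^[m] x) : Fin n) = f^[m] ↑x := by
        intro m x
        induction m with
        | zero => rfl
        | succ m ih => rw [iterate_succ_apply', iterate_succ_apply', ← ih]
      set g : Fin n → Fin n := fun a => if a ∈ C then a else f a with hgdef
      have hg : RootedF C g := by
        constructor
        · intro a ha
          simp [hgdef, if_pos ha]
        · intro a
          by_cases ha : a ∈ C
          · exact ⟨0, ha⟩
          · obtain ⟨b, p, hp, hper⟩ := exists_reach_periodic f a
            have hbC : f^[b] a ∈ C := (hCiff _).mpr ⟨p, hp, hper⟩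
            obtain ⟨m, hm, hmin⟩ := exists_first_hit f (· ∈ C) ⟨b, hbC⟩
            refine ⟨m, ?_⟩
            have := iterate_eq_of_agree (f := f) (g := g) (p := (· ∈ C))
              (fun y hy => by simp [hgdef, if_neg hy]) (x := a) (m := m) hmin
            rw [← this]
            exact hm
      have hσcyc : CycFun σ := by
        intro x y
        obtain ⟨p, q, hpq⟩ := hconn ↑x ↑y
        obtain ⟨t, ht, hty⟩ := (hCiff ↑y).mp y.2
        have htq : ∀ s, f^[t * s] ↑y = ↑y := by
          intro s
          induction s with
          | zero => rfl
          | succ s ih => rw [Nat.mul_succ, Function.iterate_add_apply, hty, ih]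
        refine ⟨(t * q - q) + p, Subtype.ext ?_⟩
        rw [hσiter, Function.iterate_add_apply, hpq, ← Function.iterate_add_apply,
          Nat.sub_add_cancel (Nat.le_mul_of_pos_left q ht), htq]
      refine ⟨⟨⟨σ, hσcyc⟩, ⟨g, hg⟩⟩, ?_⟩
      apply Subtype.ext
      funext a
      show F σ g a = f a
      by_cases ha : a ∈ C
      · have := hF_in σ g ⟨a, ha⟩
        simp only at this
        rw [this]
      · rw [hF_out σ g a ha, hgdef]
        simp [if_neg ha]
  have hcards := Nat.card_eq_of_bijective Ψ hbij
  rw [← hcards, Nat.card_prod, card_cycFun]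
  congr 2
  rw [Fintype.card_coe]


/-- The number of connected endofunctions on `{1,…,n}` with no fixed point equals
`(n-1)!·Σ_{j=0}^{n-2} n^j/j!`, with `(n-1)!/j!` expressed as a descending factorial. -/
theorem stmt14 (n : ℕ) (hn : 1 ≤ n) :
    Nat.card {f : Fin n → Fin n // ConnFun f ∧ ∀ i, f i ≠ i} =
      ∑ j ∈ Finset.range (n - 1), (n - 1).descFactorial (n - 1 - j) * n ^ j := by
  classical
  have h0 : Nat.card {f : Fin n → Fin n // ConnFun f ∧ ∀ i, f i ≠ i}
      = Nat.card {f : Fin n → Fin n // (∀ i j, ∃ p q, f^[p] i = f^[q] j) ∧ ∀ i, f i ≠ i} :=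
    Nat.card_congr (Equiv.subtypeEquivRight (fun f => by
      constructor
      · rintro ⟨⟨hne, hconn⟩, hfpf⟩
        exact ⟨fun i j => (eqvGen_iff f i j).mp (hconn i j), hfpf⟩
      · rintro ⟨hconn, hfpf⟩
        exact ⟨⟨⟨⟨0, hn⟩⟩, fun i j => (eqvGen_iff f i j).mpr (hconn i j)⟩, hfpf⟩))
  rw [h0]
  have hsplit : Nat.card {f : Fin n → Fin n //
        (∀ i j, ∃ p q, f^[p] i = f^[q] j) ∧ ∀ i, f i ≠ i}
      = ∑ C : Finset (Fin n), Nat.card {f : Fin n → Fin n //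
          ((∀ i j, ∃ p q, f^[p] i = f^[q] j) ∧ ∀ i, f i ≠ i) ∧
          Finset.univ.filter (fun x => ∃ p, 0 < p ∧ f^[p] x = x) = C} :=
    calc Nat.card {f : Fin n → Fin n // (∀ i j, ∃ p q, f^[p] i = f^[q] j) ∧ ∀ i, f i ≠ i}
        = Nat.card (Σ C : Finset (Fin n),
            {F : {f : Fin n → Fin n // (∀ i j, ∃ p q, f^[p] i = f^[q] j) ∧ ∀ i, f i ≠ i} //
            Finset.univ.filter (fun x => ∃ p, 0 < p ∧ F.1^[p] x = x) = C}) :=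
          Nat.card_congr (Equiv.sigmaFiberEquiv _).symm
      _ = ∑ C : Finset (Fin n), Nat.card
            {F : {f : Fin n → Fin n // (∀ i j, ∃ p q, f^[p] i = f^[q] j) ∧ ∀ i, f i ≠ i} //
            Finset.univ.filter (fun x => ∃ p, 0 < p ∧ F.1^[p] x = x) = C} := by
          rw [Nat.card_eq_fintype_card, Fintype.card_sigma]
          exact Finset.sum_congr rfl fun C _ => (Nat.card_eq_fintype_card).symm
      _ = _ := Finset.sum_congr rfl fun C _ =>
          Nat.card_congr (Equiv.subtypeSubtypeEquivSubtypeInter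
            (fun f : Fin n → Fin n => (∀ i j, ∃ p q, f^[p] i = f^[q] j) ∧ ∀ i, f i ≠ i)
            (fun f : Fin n → Fin n =>
              Finset.univ.filter (fun x => ∃ p, 0 < p ∧ f^[p] x = x) = C))
  rw [hsplit]
  have hval : ∀ C : Finset (Fin n), Nat.card {f : Fin n → Fin n //
        ((∀ i j, ∃ p q, f^[p] i = f^[q] j) ∧ ∀ i, f i ≠ i) ∧
        Finset.univ.filter (fun x => ∃ p, 0 < p ∧ f^[p] x = x) = C}
      = if 2 ≤ C.card then
          (C.card - 1).factorial * Nat.card {g : Fin n → Fin n // RootedF C g} else 0 := by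
    intro C
    split_ifs with h
    · exact main_fiber n C h
    · exact main_fiber_empty n hn C h
  rw [Finset.sum_congr rfl fun C _ => hval C]
  -- multiply by n and cancel
  refine Nat.eq_of_mul_eq_mul_right hn ?_
  have hCval : ∀ C : Finset (Fin n),
      (if 2 ≤ C.card then
        (C.card - 1).factorial * Nat.card {g : Fin n → Fin n // RootedF C g} else 0) * n
      = if 2 ≤ C.card then C.card.factorial * n ^ (n - C.card) else 0 := by
    intro C
    split_ifs with h
    · have hne : C.Nonempty := Finset.card_pos.mp (lt_of_lt_of_le two_pos h)
      have hc := card_rootedF (Fin n) C hne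
      simp only [Fintype.card_fin] at hc
      rw [mul_assoc, hc]
      have hfac : (C.card - 1).factorial * C.card = C.card.factorial := by
        obtain ⟨m, hm⟩ := Nat.exists_eq_succ_of_ne_zero (Nat.one_le_iff_ne_zero.mp (le_trans one_le_two h))
        rw [hm]
        simp [Nat.factorial_succ]
        ring
      calc (C.card - 1).factorial * (C.card * n ^ (n - C.card))
          = ((C.card - 1).factorial * C.card) * n ^ (n - C.card) := by ring
        _ = C.card.factorial * n ^ (n - C.card) := by rw [hfac]
    · simp
  rw [Finset.sum_mul, Finset.sum_congr rfl fun C _ => hCval C]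
  rw [show (Finset.univ : Finset (Finset (Fin n)))
      = (Finset.univ : Finset (Fin n)).powerset from (Finset.powerset_univ).symm,
    Finset.powerset_card_disjiUnion]
  erw [Finset.sum_disjiUnion]
  rw [Finset.card_univ, Fintype.card_fin]
  have hgroup : ∀ k ∈ Finset.range (n+1),
      ∑ C ∈ Finset.powersetCard k (Finset.univ : Finset (Fin n)),
        (if 2 ≤ C.card then C.card.factorial * n ^ (n - C.card) else 0)
      = if 2 ≤ k then n.descFactorial k * n ^ (n - k) else 0 := by
    intro k _
    have hterm : ∀ C ∈ Finset.powersetCard k (Finset.univ : Finset (Fin n)),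
        (if 2 ≤ C.card then C.card.factorial * n ^ (n - C.card) else 0)
        = if 2 ≤ k then k.factorial * n ^ (n - k) else 0 := by
      intro C hC
      rw [(Finset.mem_powersetCard.mp hC).2]
    rw [Finset.sum_congr rfl hterm, Finset.sum_const, Finset.card_powersetCard,
      Finset.card_univ, Fintype.card_fin, smul_eq_mul]
    split_ifs with h
    · rw [Nat.descFactorial_eq_factorial_mul_choose]
      ring
    · simp
  rw [Finset.sum_congr rfl hgroup, ← Finset.sum_filter]
  clear hval hCval hgroup hsplit h0
  have hrhs : ∀ j ∈ Finset.range (n-1),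
      (n - 1).descFactorial (n - 1 - j) * n ^ j * n = n.descFactorial (n - j) * n ^ j := by
    intro j hj
    have hjlt : j < n - 1 := Finset.mem_range.mp hj
    have e1 : n - j = (n - 1 - j) + 1 := by omega
    have e2 : n = (n - 1) + 1 := by omega
    have e3 : n.descFactorial (n - j) = n * (n-1).descFactorial (n-1-j) := by
      calc n.descFactorial (n - j) = ((n-1)+1).descFactorial ((n-1-j)+1) := by rw [← e1, ← e2]
        _ = ((n-1)+1) * (n-1).descFactorial (n-1-j) := Nat.succ_descFactorial_succ _ _
        _ = n * (n-1).descFactorial (n-1-j) := by rw [← e2]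
    rw [e3]
    ring
  rw [Finset.sum_mul, Finset.sum_congr rfl hrhs]
  refine Finset.sum_nbij' (fun k => n - k) (fun j => n - j) ?_ ?_ ?_ ?_ ?_
  · intro k hk
    simp only [Finset.mem_filter, Finset.mem_range] at hk
    show n - k ∈ Finset.range (n - 1)
    exact Finset.mem_range.mpr (by omega)
  · intro j hj
    have := Finset.mem_range.mp hj
    show n - j ∈ _
    simp only [Finset.mem_filter, Finset.mem_range]
    omega
  · intro k hk
    simp only [Finset.mem_filter, Finset.mem_range] at hk
    show n - (n - k) = k
    omega
  · intro j hj
    have := Finset.mem_range.mp hj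
    show n - (n - j) = j
    omega
  · intro k hk
    simp only [Finset.mem_filter, Finset.mem_range] at hk
    show _ = n.descFactorial (n - (n - k)) * n ^ (n - k)
    have : n - (n - k) = k := by omega
    rw [this]
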